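/- For all natural numbers p ≥ 1 and q ≥ 1: if p is even then Sh₊(p,q) = Sh₊(p−1,q) + Sh₊(p,q−1) and Sh₋(p,q) = Sh₋(p−1,q) + Sh₋(p,q−1); if p is odd then Sh₊(p,q) = Sh₊(p−1,q) + Sh₋(p,q−1) and Sh₋(p,q) = Sh₋(p−1,q) + Sh₊(p,q−1). That is, |Sh_±(p,q)| = |Sh_±(p−1,q)| + |Sh_{±(−1)^p}(p,q−1)|. -/

import Mathlib

/-- A `(p,q)`-shuffle: a permutation of `Fin (p+q)` strictly increasing on the
first `p` positions and on the last `q` positions. -/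
def IsShuffle (p q : ℕ) (σ : Equiv.Perm (Fin (p + q))) : Prop :=
  (∀ i j : Fin (p + q), i < j → (j : ℕ) < p → σ i < σ j) ∧
  (∀ i j : Fin (p + q), i < j → p ≤ (i : ℕ) → σ i < σ j)

/-- `Sh₊(p,q)`: the number of `(p,q)`-shuffles of sign `+1`. -/
noncomputable def ShPos (p q : ℕ) : ℕ :=
  Nat.card {σ : Equiv.Perm (Fin (p + q)) // IsShuffle p q σ ∧ Equiv.Perm.sign σ = 1}

/-- `Sh₋(p,q)`: the number of `(p,q)`-shuffles of sign `−1`. -/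
noncomputable def ShNeg (p q : ℕ) : ℕ :=
  Nat.card {σ : Equiv.Perm (Fin (p + q)) // IsShuffle p q σ ∧ Equiv.Perm.sign σ = -1}

namespace ShuffleAux

open Equiv Equiv.Perm

/-- The shuffle condition, with flexible ambient size. -/
def IsShuf (p : ℕ) {n : ℕ} (σ : Equiv.Perm (Fin n)) : Prop :=
  (∀ i j : Fin n, i < j → (j : ℕ) < p → σ i < σ j) ∧
  (∀ i j : Fin n, i < j → p ≤ (i : ℕ) → σ i < σ j)

/-- Insert the fixed point `k ↦ 0` into a permutation `τ` of `Fin n`. -/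
noncomputable def FF {n : ℕ} (k : Fin (n+1)) (τ : Perm (Fin n)) : Perm (Fin (n+1)) :=
  Fin.cycleRange k * τ.viaFintypeEmbedding (Fin.succAboveEmb k)

section
variable {n : ℕ}

lemma FF_apply_pivot (k : Fin (n+1)) (τ : Perm (Fin n)) : FF k τ k = 0 := by
  have h : k ∉ Set.range (Fin.succAboveEmb k) := by
    rintro ⟨i, hi⟩
    exact Fin.succAbove_ne k i hi
  simp only [FF, Perm.mul_apply]
  rw [Perm.viaFintypeEmbedding_apply_notMem_range _ _ h, Fin.cycleRange_self]

lemma cycleRange_succAbove (k : Fin (n+1)) (j : Fin n) :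
    Fin.cycleRange k (k.succAbove j) = j.succ := by
  rcases lt_or_ge j.castSucc k with h | h
  · rw [Fin.succAbove_of_castSucc_lt _ _ h, Fin.cycleRange_of_lt h, Fin.coeSucc_eq_succ]
  · rw [Fin.succAbove_of_le_castSucc _ _ h, Fin.cycleRange_of_gt
      (lt_of_le_of_lt h (Fin.castSucc_lt_succ (i := j)))]

lemma FF_apply_succAbove (k : Fin (n+1)) (τ : Perm (Fin n)) (i : Fin n) :
    FF k τ (k.succAbove i) = (τ i).succ := by
  simp only [FF, Perm.mul_apply]
  have : k.succAbove i = (Fin.succAboveEmb k) i := rfl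
  rw [this, Perm.viaFintypeEmbedding_apply_image]
  exact cycleRange_succAbove k (τ i)

lemma sign_FF (k : Fin (n+1)) (τ : Perm (Fin n)) :
    sign (FF k τ) = (-1)^(k:ℕ) * sign τ := by
  rw [FF, map_mul, Fin.sign_cycleRange, Perm.viaFintypeEmbedding_sign]

lemma FF_injective (k : Fin (n+1)) : Function.Injective (FF (n := n) k) := by
  intro τ τ' h
  refine Equiv.ext fun i => ?_
  have := congrArg (fun σ : Perm (Fin (n+1)) => σ (k.succAbove i)) h
  simp only [FF_apply_succAbove] at this
  exact Fin.succ_injective _ this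

lemma FF_surj (σ : Perm (Fin (n+1))) (k : Fin (n+1)) (hσ : σ k = 0) :
    ∃ τ : Perm (Fin n), FF k τ = σ := by
  set ρ : Perm (Fin (n+1)) := (Fin.cycleRange k)⁻¹ * σ with hρ
  have hρk : ρ k = k := by
    simp only [hρ, Perm.mul_apply, hσ]
    have : Fin.cycleRange k k = 0 := Fin.cycleRange_self k
    rw [← this]; exact (Fin.cycleRange k).symm_apply_apply k
  have hmem : ∀ x : Fin (n+1), x ≠ k ↔ ρ x ≠ k := by
    intro x
    constructor
    · intro hx h
      exact hx (ρ.injective (h.trans hρk.symm))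
    · intro hx h
      exact hx (h ▸ hρk)
  let e : Fin n ≃ {x : Fin (n+1) // x ≠ k} := finSuccAboveEquiv k
  let ρ' : Perm {x : Fin (n+1) // x ≠ k} := ρ.subtypePerm (fun x => (hmem x).symm)
  refine ⟨e.trans (ρ'.trans e.symm), Equiv.ext fun x => ?_⟩
  rcases eq_or_ne x k with rfl | hx
  · rw [FF_apply_pivot, hσ]
  · obtain ⟨i, rfl⟩ := Fin.exists_succAbove_eq hx
    rw [FF_apply_succAbove]
    have he : ∀ j : Fin n, (e j : Fin (n+1)) = k.succAbove j := fun j => rfl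
    have : k.succAbove ((e.trans (ρ'.trans e.symm)) i) = ρ (k.succAbove i) := by
      have := he (e.symm (ρ' (e i)))
      simp only [Equiv.trans_apply]
      rw [← this, Equiv.apply_symm_apply]
      rfl
    calc ((e.trans (ρ'.trans e.symm)) i).succ
        = Fin.cycleRange k (k.succAbove ((e.trans (ρ'.trans e.symm)) i)) :=
          (cycleRange_succAbove k _).symm
      _ = σ (k.succAbove i) := by
          rw [this, hρ]; simp [Perm.mul_apply]

lemma card_pivot (k : Fin (n+1)) (P : Perm (Fin (n+1)) → Prop) (Q : Perm (Fin n) → Prop)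
    (s s' : ℤˣ) (hs' : (-1)^(k:ℕ) * s' = s) (hPQ : ∀ τ, P (FF k τ) ↔ Q τ) :
    Nat.card {σ : Perm (Fin (n+1)) // (P σ ∧ sign σ = s) ∧ σ k = 0}
      = Nat.card {τ : Perm (Fin n) // Q τ ∧ sign τ = s'} := by
  have hsgn : ∀ τ : Perm (Fin n), sign τ = s' → sign (FF k τ) = s := by
    intro τ ht; rw [sign_FF, ht, hs']
  refine (Nat.card_eq_of_bijective
    (fun τ : {τ : Perm (Fin n) // Q τ ∧ sign τ = s'} =>
      ⟨FF k τ.1, ⟨(hPQ τ.1).2 τ.2.1, hsgn τ.1 τ.2.2⟩, FF_apply_pivot k τ.1⟩) ⟨?_, ?_⟩).symm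
  · intro a b hab
    exact Subtype.ext (FF_injective k (congrArg Subtype.val hab))
  · rintro ⟨σ, ⟨hP, hsg⟩, hk⟩
    obtain ⟨τ, rfl⟩ := FF_surj σ k hk
    have hτs : sign τ = s' := by
      rw [sign_FF] at hsg
      have h2 : (-1 : ℤˣ)^(k:ℕ) * ((-1 : ℤˣ)^(k:ℕ) * sign τ) = (-1 : ℤˣ)^(k:ℕ) * s :=
        congrArg _ hsg
      rw [← hs', ← mul_assoc, ← pow_add, ← two_mul, pow_mul, neg_one_sq, one_pow, one_mul]
        at h2
      rwa [← mul_assoc, ← pow_add, ← two_mul, pow_mul, neg_one_sq, one_pow, one_mul] at h2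
    exact ⟨⟨τ, (hPQ τ).1 hP, hτs⟩, rfl⟩

lemma card_split {α : Type*} [Fintype α] (P B C : α → Prop)
    (h : ∀ x, P x → B x ∨ C x) (hd : ∀ x, ¬(B x ∧ C x)) :
    Nat.card {x // P x} = Nat.card {x // P x ∧ B x} + Nat.card {x // P x ∧ C x} := by
  have e1 : Nat.card {x // P x} = Set.ncard {x | P x} := Nat.card_coe_set_eq _
  have e2 : Nat.card {x // P x ∧ B x} = Set.ncard {x | P x ∧ B x} := Nat.card_coe_set_eq _
  have e3 : Nat.card {x // P x ∧ C x} = Set.ncard {x | P x ∧ C x} := Nat.card_coe_set_eq _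
  rw [e1, e2, e3]
  have hu : {x | P x} = {x | P x ∧ B x} ∪ {x | P x ∧ C x} := by
    ext x; simp only [Set.mem_setOf_eq, Set.mem_union]
    constructor
    · intro hx; rcases h x hx with hb | hc
      · exact Or.inl ⟨hx, hb⟩
      · exact Or.inr ⟨hx, hc⟩
    · rintro (⟨hx, _⟩ | ⟨hx, _⟩) <;> exact hx
  rw [hu, Set.ncard_union_eq ?_ (Set.toFinite _) (Set.toFinite _)]
  rw [Set.disjoint_left]
  rintro x ⟨_, hb⟩ ⟨_, hc⟩
  exact hd x ⟨hb, hc⟩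

lemma shuf_pivot {p : ℕ} (hp : 1 ≤ p) (hpn : p ≤ n) (σ : Perm (Fin (n+1)))
    (h : IsShuf p σ) : σ 0 = 0 ∨ σ ⟨p, by omega⟩ = 0 := by
  set j := σ.symm 0 with hj
  have hσj : σ j = 0 := σ.apply_symm_apply 0
  rcases Nat.lt_trichotomy (j : ℕ) p with hlt | heq | hgt
  · rcases Nat.eq_zero_or_pos (j : ℕ) with h0 | h1
    · left
      have hj0 : j = 0 := Fin.ext h0
      rwa [hj0] at hσj
    · exfalso
      have hij : (⟨(j : ℕ) - 1, by omega⟩ : Fin (n+1)) < j := by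
        show (j:ℕ) - 1 < (j:ℕ); omega
      have := h.1 _ j hij hlt
      rw [hσj] at this
      exact Fin.not_lt_zero _ this
  · right
    have hjp : j = ⟨p, by omega⟩ := Fin.ext heq
    rwa [hjp] at hσj
  · exfalso
    have hij : (⟨(j : ℕ) - 1, by omega⟩ : Fin (n+1)) < j := by
      show (j:ℕ) - 1 < (j:ℕ); omega
    have := h.2 _ j hij (by simp; omega)
    rw [hσj] at this
    exact Fin.not_lt_zero _ this

lemma card_cast (p : ℕ) {m m' : ℕ} (h : m = m') (s : ℤˣ) :
    Nat.card {σ : Perm (Fin m) // IsShuf p σ ∧ sign σ = s}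
      = Nat.card {σ : Perm (Fin m') // IsShuf p σ ∧ sign σ = s} := by
  subst h; rfl

lemma succAbove_coe_lt (k : Fin (n+1)) (i : Fin n) (h : (i : ℕ) < (k : ℕ)) :
    ((k.succAbove i) : ℕ) = i := by
  rw [Fin.succAbove_of_castSucc_lt _ _ (by simpa [Fin.lt_def] using h)]
  rfl

lemma succAbove_coe_ge (k : Fin (n+1)) (i : Fin n) (h : (k : ℕ) ≤ (i : ℕ)) :
    ((k.succAbove i) : ℕ) = i + 1 := by
  rw [Fin.succAbove_of_le_castSucc _ _ (by simpa [Fin.le_def] using h)]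
  rfl

lemma shuf_L0 {p : ℕ} (τ : Perm (Fin n)) : IsShuf (p+1) (FF 0 τ) ↔ IsShuf p τ := by
  have hz : ∀ i : Fin n, FF 0 τ i.succ = (τ i).succ := by
    intro i
    have := FF_apply_succAbove (0 : Fin (n+1)) τ i
    rwa [Fin.zero_succAbove] at this
  constructor
  · rintro ⟨h1, h2⟩
    constructor
    · intro i j hij hjp
      have := h1 i.succ j.succ (by simpa [Fin.succ_lt_succ_iff] using hij)
        (by simp [Fin.val_succ]; omega)
      rw [hz, hz] at this
      simpa [Fin.succ_lt_succ_iff] using this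
    · intro i j hij hip
      have := h2 i.succ j.succ (by simpa [Fin.succ_lt_succ_iff] using hij)
        (by simp [Fin.val_succ]; omega)
      rw [hz, hz] at this
      simpa [Fin.succ_lt_succ_iff] using this
  · rintro ⟨h1, h2⟩
    constructor
    · intro i j hij hjp
      obtain ⟨j', rfl⟩ := Fin.eq_succ_of_ne_zero (Fin.pos_iff_ne_zero.1
        (lt_of_le_of_lt (Fin.zero_le i) hij))
      rcases eq_or_ne i 0 with rfl | hi0
      · rw [FF_apply_pivot 0 τ, hz]
        exact Fin.succ_pos _
      · obtain ⟨i', rfl⟩ := Fin.eq_succ_of_ne_zero hi0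
        rw [hz, hz]
        have hij' : i' < j' := by simpa [Fin.succ_lt_succ_iff] using hij
        have : τ i' < τ j' := h1 i' j' hij' (by simp [Fin.val_succ] at hjp; omega)
        simpa [Fin.succ_lt_succ_iff] using this
    · intro i j hij hip
      have hi0 : i ≠ 0 := by
        intro h; rw [h] at hip; simp at hip
      obtain ⟨i', rfl⟩ := Fin.eq_succ_of_ne_zero hi0
      obtain ⟨j', rfl⟩ := Fin.eq_succ_of_ne_zero (Fin.pos_iff_ne_zero.1
        (lt_of_le_of_lt (Fin.zero_le _) hij))
      rw [hz, hz]
      have hij' : i' < j' := by simpa [Fin.succ_lt_succ_iff] using hij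
      have : τ i' < τ j' := h2 i' j' hij' (by simp [Fin.val_succ] at hip; omega)
      simpa [Fin.succ_lt_succ_iff] using this

lemma shuf_Lp {p : ℕ} (hp : p < n+1) (τ : Perm (Fin n)) :
    IsShuf p (FF ⟨p, hp⟩ τ) ↔ IsShuf p τ := by
  set k : Fin (n+1) := ⟨p, hp⟩ with hk
  have hkc : (k : ℕ) = p := rfl
  constructor
  · rintro ⟨h1, h2⟩
    constructor
    · intro i j hij hjp
      have hic : ((k.succAbove i) : ℕ) = i :=
        succAbove_coe_lt k i (by rw [hkc]; exact lt_trans (show (i:ℕ) < (j:ℕ) from hij) hjp)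
      have hjc : ((k.succAbove j) : ℕ) = j := succAbove_coe_lt k j (by rw [hkc]; exact hjp)
      have := h1 (k.succAbove i) (k.succAbove j)
        (by rw [Fin.lt_def, hic, hjc]; exact hij) (by rw [hjc]; exact hjp)
      rw [FF_apply_succAbove, FF_apply_succAbove] at this
      simpa [Fin.succ_lt_succ_iff] using this
    · intro i j hij hip
      have hjp' : p ≤ (j : ℕ) := le_trans hip (le_of_lt (show (i:ℕ) < (j:ℕ) from hij))
      have hic : ((k.succAbove i) : ℕ) = i + 1 := succAbove_coe_ge k i (by omega)
      have hjc : ((k.succAbove j) : ℕ) = j + 1 := succAbove_coe_ge k j (by omega)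
      have := h2 (k.succAbove i) (k.succAbove j)
        (by rw [Fin.lt_def, hic, hjc]; have : (i:ℕ) < (j:ℕ) := hij; omega) (by omega)
      rw [FF_apply_succAbove, FF_apply_succAbove] at this
      simpa [Fin.succ_lt_succ_iff] using this
  · rintro ⟨h1, h2⟩
    constructor
    · intro i j hij hjp
      have hik : i ≠ k := by
        intro h; rw [h] at hij
        have : (j : ℕ) > p := by have := show (k:ℕ) < (j:ℕ) from hij; omega
        omega
      have hjk : j ≠ k := by
        intro h; rw [h] at hjp; simp [hkc] at hjp
      obtain ⟨i', rfl⟩ := Fin.exists_succAbove_eq hik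
      obtain ⟨j', rfl⟩ := Fin.exists_succAbove_eq hjk
      have hj'p : (j' : ℕ) < p := by
        rcases lt_or_ge (j' : ℕ) p with h | h
        · exact h
        · rw [succAbove_coe_ge k j' (by omega)] at hjp; omega
      have hjc : ((k.succAbove j') : ℕ) = j' := succAbove_coe_lt k j' (by omega)
      have hi'p : (i' : ℕ) < p := by
        have : ((k.succAbove i') : ℕ) < p :=
          lt_trans (show ((k.succAbove i'):ℕ) < ((k.succAbove j'):ℕ) from hij) (hjc ▸ hjp)
        rcases lt_or_ge (i' : ℕ) p with h | h
        · exact h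
        · rw [succAbove_coe_ge k i' (by omega)] at this; omega
      have hic : ((k.succAbove i') : ℕ) = i' := succAbove_coe_lt k i' (by omega)
      rw [FF_apply_succAbove, FF_apply_succAbove]
      have : τ i' < τ j' := h1 i' j' (by rw [Fin.lt_def, hic, hjc] at hij; exact hij) hj'p
      simpa [Fin.succ_lt_succ_iff] using this
    · intro i j hij hip
      have hjk : j ≠ k := by
        intro h
        have : (j : ℕ) = p := by rw [h]
        have : (i : ℕ) < p := by rw [← this]; exact hij
        omega
      obtain ⟨j', rfl⟩ := Fin.exists_succAbove_eq hjk
      have hjgt : p < ((k.succAbove j') : ℕ) := by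
        have hne : ((k.succAbove j') : ℕ) ≠ p := fun h => hjk (Fin.ext h)
        have := lt_of_le_of_lt hip (show (i : ℕ) < ((k.succAbove j') : ℕ) from hij)
        omega
      have hj'p : p ≤ (j' : ℕ) := by
        rcases lt_or_ge (j' : ℕ) p with h | h
        · rw [succAbove_coe_lt k j' (by omega)] at hjgt; omega
        · exact h
      have hjc : ((k.succAbove j') : ℕ) = j' + 1 := succAbove_coe_ge k j' (by omega)
      rcases eq_or_ne i k with rfl | hik
      · rw [FF_apply_pivot, FF_apply_succAbove]
        exact Fin.succ_pos _
      · obtain ⟨i', rfl⟩ := Fin.exists_succAbove_eq hik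
        have hipk : p < ((k.succAbove i') : ℕ) := by
          have hne : ((k.succAbove i') : ℕ) ≠ p := fun h => hik (Fin.ext h)
          omega
        have hi'p : p ≤ (i' : ℕ) := by
          rcases lt_or_ge (i' : ℕ) p with h | h
          · rw [succAbove_coe_lt k i' (by omega)] at hipk; omega
          · exact h
        have hic : ((k.succAbove i') : ℕ) = i' + 1 := succAbove_coe_ge k i' (by omega)
        rw [FF_apply_succAbove, FF_apply_succAbove]
        have : τ i' < τ j' := h2 i' j'
          (by rw [Fin.lt_def, hic, hjc] at hij; rw [Fin.lt_def]; omega) hi'p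
        simpa [Fin.succ_lt_succ_iff] using this

/-- The main recurrence, in flexible-size form. -/
lemma key_rec (p' q' : ℕ) (s s' : ℤˣ) (hs' : (-1 : ℤˣ)^(p'+1) * s' = s) :
    Nat.card {σ : Perm (Fin ((p'+1) + q' + 1)) // IsShuf (p'+1) σ ∧ sign σ = s}
      = Nat.card {τ : Perm (Fin ((p'+1) + q')) // IsShuf p' τ ∧ sign τ = s}
      + Nat.card {τ : Perm (Fin ((p'+1) + q')) // IsShuf (p'+1) τ ∧ sign τ = s'} := by
  classical
  have hsplit := card_split
    (fun σ : Perm (Fin ((p'+1) + q' + 1)) => IsShuf (p'+1) σ ∧ sign σ = s)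
    (fun σ => σ 0 = 0) (fun σ => σ ⟨p'+1, by omega⟩ = 0)
    (fun σ hσ => shuf_pivot (by omega) (by omega) σ hσ.1)
    (by
      rintro σ ⟨h0, hp1⟩
      have : (0 : Fin ((p'+1) + q' + 1)) = ⟨p'+1, by omega⟩ :=
        σ.injective (h0.trans hp1.symm)
      have := congrArg Fin.val this
      simp at this)
  have h0 := card_pivot (n := (p'+1) + q') 0 (IsShuf (p'+1)) (IsShuf p') s s
    (by norm_num) (fun τ => shuf_L0 τ)
  have hp := card_pivot (n := (p'+1) + q') ⟨p'+1, by omega⟩ (IsShuf (p'+1)) (IsShuf (p'+1))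
    s s' hs' (fun τ => shuf_Lp (by omega) τ)
  exact hsplit.trans (by rw [h0, hp])

end

end ShuffleAux

open ShuffleAux Equiv Equiv.Perm in
/-- Pascal-type recurrence for signed shuffle counts:
`|Sh_±(p,q)| = |Sh_±(p−1,q)| + |Sh_{±(−1)^p}(p,q−1)|`. -/
theorem stmt13 (p q : ℕ) (hp : 1 ≤ p) (hq : 1 ≤ q) :
    (Even p →
      ShPos p q = ShPos (p - 1) q + ShPos p (q - 1) ∧
      ShNeg p q = ShNeg (p - 1) q + ShNeg p (q - 1)) ∧
    (Odd p →
      ShPos p q = ShPos (p - 1) q + ShNeg p (q - 1) ∧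
      ShNeg p q = ShNeg (p - 1) q + ShPos p (q - 1)) := by
  obtain ⟨p', rfl⟩ : ∃ p', p = p' + 1 := ⟨p - 1, by omega⟩
  obtain ⟨q', rfl⟩ : ∃ q', q = q' + 1 := ⟨q - 1, by omega⟩
  have ePos : ShPos (p'+1) (q'+1)
      = Nat.card {σ : Perm (Fin ((p'+1) + q' + 1)) // IsShuf (p'+1) σ ∧ sign σ = 1} := rfl
  have eNeg : ShNeg (p'+1) (q'+1)
      = Nat.card {σ : Perm (Fin ((p'+1) + q' + 1)) // IsShuf (p'+1) σ ∧ sign σ = -1} := rfl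
  have ePos' : ShPos p' (q'+1)
      = Nat.card {τ : Perm (Fin ((p'+1) + q')) // IsShuf p' τ ∧ sign τ = 1} :=
    card_cast p' (show p' + (q'+1) = (p'+1) + q' by omega) 1
  have eNeg' : ShNeg p' (q'+1)
      = Nat.card {τ : Perm (Fin ((p'+1) + q')) // IsShuf p' τ ∧ sign τ = -1} :=
    card_cast p' (show p' + (q'+1) = (p'+1) + q' by omega) (-1)
  have ePos'' : ShPos (p'+1) q'
      = Nat.card {τ : Perm (Fin ((p'+1) + q')) // IsShuf (p'+1) τ ∧ sign τ = 1} := rfl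
  have eNeg'' : ShNeg (p'+1) q'
      = Nat.card {τ : Perm (Fin ((p'+1) + q')) // IsShuf (p'+1) τ ∧ sign τ = -1} := rfl
  simp only [Nat.add_sub_cancel]
  constructor
  · intro hev
    have hpow : (-1 : ℤˣ)^(p'+1) = 1 := Even.neg_one_pow hev
    constructor
    · rw [ePos, ePos', ePos'']
      exact key_rec p' q' 1 1 (by rw [hpow, one_mul])
    · rw [eNeg, eNeg', eNeg'']
      exact key_rec p' q' (-1) (-1) (by rw [hpow, one_mul])
  · intro hod
    have hpow : (-1 : ℤˣ)^(p'+1) = -1 := Odd.neg_one_pow hod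
    constructor
    · rw [ePos, ePos', eNeg'']
      exact key_rec p' q' 1 (-1) (by rw [hpow]; norm_num)
    · rw [eNeg, eNeg', ePos'']
      exact key_rec p' q' (-1) 1 (by rw [hpow, mul_one])
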